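/- For any graph G, the number (3+√5)/2 is a Laplacian eigenvalue of G with multiplicity at least p_2(G) − q_2(G), and likewise (3−√5)/2 is a Laplacian eigenvalue with multiplicity at least p_2(G) − q_2(G). -/

import Mathlib

open Matrix Polynomial Real

/-- A walk `w` from `u` to `v` is a pendant path of length `k` if it is a path of length
`k`, its end `u` has degree `1`, its end `v` has degree at least `3`, and all internal
vertices have degree `2`. -/
def IsPendantPath {V : Type*} [Fintype V] [DecidableEq V] (G : SimpleGraph V)
    [DecidableRel G.Adj] {u v : V} (w : G.Walk u v) (k : ℕ) : Prop :=
  w.IsPath ∧ w.length = k ∧ G.degree u = 1 ∧ 3 ≤ G.degree v ∧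
    ∀ x ∈ w.support, x ≠ u → x ≠ v → G.degree x = 2


open SimpleGraph

section LinearAlgebraAux
open Matrix Polynomial

variable {n : Type*} [Fintype n] [DecidableEq n]

lemma charpoly_conj_unit (U D : Matrix n n ℝ) (h1 : U * star U = 1) (h2 : star U * U = 1) :
    (U * D * star U).charpoly = D.charpoly := by
  unfold Matrix.charpoly
  have hC : charmatrix (U * D * star U) = U.map C * charmatrix D * (star U).map C := by
    unfold charmatrix
    rw [Matrix.mul_sub, Matrix.sub_mul]
    congr 1
    · rw [← (scalar_commute (n := n) (X : ℝ[X]) (fun r => Commute.all _ _) (U.map C)).eq,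
        mul_assoc, ← Matrix.map_mul, h1, Matrix.map_one _ (map_zero C) (map_one C), mul_one]
    · simp only [RingHom.mapMatrix_apply]
      rw [← Matrix.map_mul, ← Matrix.map_mul]
  rw [hC, det_mul, det_mul, mul_comm, ← mul_assoc, ← det_mul, ← Matrix.map_mul, h2,
    Matrix.map_one _ (map_zero C) (map_one C), det_one, one_mul]

lemma charpoly_diagonal (d : n → ℝ) :
    (Matrix.diagonal d).charpoly = ∏ i, (X - C (d i)) := by
  unfold Matrix.charpoly charmatrix
  simp only [RingHom.mapMatrix_apply, scalar_apply]
  rw [diagonal_map (map_zero C), diagonal_sub, det_diagonal]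

lemma rootMultiplicity_prod_X_sub_C (d : n → ℝ) (μ : ℝ) :
    (∏ i, (X - C (d i))).rootMultiplicity μ = Fintype.card {i // d i = μ} := by
  have hne : (∏ i, (X - C (d i))) ≠ 0 := by
    apply Finset.prod_ne_zero_iff.2
    intro i _
    exact X_sub_C_ne_zero _
  rw [← Polynomial.count_roots, Polynomial.roots_prod _ _ hne]
  simp only [roots_X_sub_C]
  rw [Multiset.bind_singleton, Multiset.count_map, Fintype.card_subtype]
  simp [Finset.card_filter, Finset.filter, eq_comm]

lemma card_le_rootMultiplicity_of_eigenvectors (A : Matrix n n ℝ) (hA : A.IsHermitian) (μ : ℝ)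
    {ι : Type*} [Fintype ι] (v : ι → n → ℝ) (hv : LinearIndependent ℝ v)
    (he : ∀ i, A *ᵥ v i = μ • v i) :
    Fintype.card ι ≤ A.charpoly.rootMultiplicity μ := by
  classical
  set U := (hA.eigenvectorUnitary : Matrix n n ℝ) with hUdef
  have hU1 : U * star U = 1 := (Matrix.mem_unitaryGroup_iff).mp hA.eigenvectorUnitary.2
  have hU2 : star U * U = 1 := (Matrix.mem_unitaryGroup_iff').mp hA.eigenvectorUnitary.2
  have hspec : A = U * diagonal hA.eigenvalues * star U := by
    have := hA.spectral_theorem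
    simpa using this
  -- charpoly
  have hcp : A.charpoly.rootMultiplicity μ = Fintype.card {i // hA.eigenvalues i = μ} := by
    have h := charpoly_conj_unit U (diagonal hA.eigenvalues) hU1 hU2
    rw [← hspec] at h
    rw [h, _root_.charpoly_diagonal, rootMultiplicity_prod_X_sub_C]
  -- kernel
  set B := A - μ • (1 : Matrix n n ℝ) with hBdef
  have hB : B = U * diagonal (fun i => hA.eigenvalues i - μ) * star U := by
    have h1 : μ • (1 : Matrix n n ℝ) = U * (μ • (1 : Matrix n n ℝ)) * star U := by
      rw [mul_smul_comm, mul_one, smul_mul_assoc, hU1]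
    rw [hBdef]
    conv_lhs => rw [hspec]
    rw [h1]
    rw [← Matrix.sub_mul, ← Matrix.mul_sub]
    congr 2
    rw [← diagonal_one, ← diagonal_smul, diagonal_sub]
    simp
  have hrank : B.rank = Fintype.card {i // hA.eigenvalues i ≠ μ} := by
    have hdet1 : IsUnit U.det := IsUnit.of_mul_eq_one _ (by rw [← det_mul, hU1, det_one])
    have hdet2 : IsUnit (star U).det := IsUnit.of_mul_eq_one _ (by rw [← det_mul, hU2, det_one])
    rw [hB, rank_mul_eq_left_of_isUnit_det _ _ hdet2,
      rank_mul_eq_right_of_isUnit_det _ _ hdet1, rank_diagonal]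
    simp [sub_ne_zero]
  have hker : ∀ i, v i ∈ LinearMap.ker B.mulVecLin := by
    intro i
    rw [LinearMap.mem_ker, mulVecLin_apply, hBdef, sub_mulVec, he i, smul_mulVec,
      one_mulVec, sub_self]
  have hcard : Fintype.card ι ≤ Module.finrank ℝ (LinearMap.ker B.mulVecLin) := by
    have hv' : LinearIndependent ℝ (fun i => (⟨v i, hker i⟩ : LinearMap.ker B.mulVecLin)) := by
      apply LinearIndependent.of_comp (LinearMap.ker B.mulVecLin).subtype
      exact hv
    exact hv'.fintype_card_le_finrank
  have hrn : Module.finrank ℝ (LinearMap.ker B.mulVecLin) + B.rank = Fintype.card n := by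
    have := LinearMap.finrank_range_add_finrank_ker B.mulVecLin
    rw [Module.finrank_fintype_fun_eq_card] at this
    rw [Matrix.rank]
    omega
  have h1 : Fintype.card {x // ¬ hA.eigenvalues x = μ}
      = Fintype.card n - Fintype.card {x // hA.eigenvalues x = μ} :=
    Fintype.card_subtype_compl _
  have h2 := Fintype.card_subtype_le (fun i => hA.eigenvalues i = μ)
  have h3 : Fintype.card {i // hA.eigenvalues i ≠ μ}
      = Fintype.card {x // ¬ hA.eigenvalues x = μ} := rfl
  rw [hcp]
  omega

end LinearAlgebraAux

lemma sqrt5_sq : Real.sqrt 5 * Real.sqrt 5 = 5 := Real.mul_self_sqrt (by norm_num)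

section GraphAux

variable {V : Type*} [Fintype V] [DecidableEq V] (G : SimpleGraph V) [DecidableRel G.Adj]

lemma walk_len2_eq {u v u' v' : V} (w : G.Walk u v) (w' : G.Walk u' v')
    (hu : u = u') (hv : v = v') (h : w.length = 2) (h' : w'.length = 2)
    (hm : w.getVert 1 = w'.getVert 1) :
    HEq w w' := by
  subst hu; subst hv
  cases w with
  | nil => simp at h
  | cons h1 rest =>
    cases rest with
    | nil => simp at h
    | cons h2 rest2 =>
      cases rest2 with
      | cons h3 rest3 => simp [SimpleGraph.Walk.length_cons] at h
      | nil =>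
        cases w' with
        | nil => simp at h'
        | cons h1' rest' =>
          cases rest' with
          | nil => simp at h'
          | cons h2' rest2' =>
            cases rest2' with
            | cons h3' rest3' => simp [SimpleGraph.Walk.length_cons] at h'
            | nil =>
              simp only [SimpleGraph.Walk.getVert_cons_succ, SimpleGraph.Walk.getVert_zero] at hm
              subst hm
              rfl

set_option linter.unusedSectionVars false

abbrev PP := {p : (u : V) × (v : V) × G.Walk u v // IsPendantPath G p.2.2 2}

variable {G}

namespace PP

def pu (p : PP G) : V := p.1.1
def pv (p : PP G) : V := p.1.2.1
def pm (p : PP G) : V := p.1.2.2.getVert 1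

variable (p : PP G)

lemma hlen : p.1.2.2.length = 2 := p.2.2.1
lemma deg_u : G.degree (pu p) = 1 := p.2.2.2.1
lemma deg_v : 3 ≤ G.degree (pv p) := p.2.2.2.2.1

lemma adj_um : G.Adj (pu p) (pm p) := by
  have := p.1.2.2.adj_getVert_succ (i := 0) (by rw [hlen]; norm_num)
  simpa [SimpleGraph.Walk.getVert_zero, pu, pm] using this

lemma adj_mv : G.Adj (pm p) (pv p) := by
  have := p.1.2.2.adj_getVert_succ (i := 1) (by rw [hlen]; norm_num)
  have h2 : p.1.2.2.getVert 2 = pv p := by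
    have := p.1.2.2.getVert_length
    rwa [hlen p] at this
  rwa [h2] at this

lemma ne_mu : pm p ≠ pu p := (adj_um p).ne'
lemma ne_mv : pm p ≠ pv p := (adj_mv p).ne

lemma ne_uv : pu p ≠ pv p := by
  intro h
  have h1 := deg_u p
  have h2 := deg_v p
  rw [h] at h1
  omega

lemma deg_m : G.degree (pm p) = 2 := by
  refine p.2.2.2.2.2 (pm p) ?_ (ne_mu p) (ne_mv p)
  rw [SimpleGraph.Walk.mem_support_iff_exists_getVert]
  exact ⟨1, rfl, by rw [hlen]; norm_num⟩

lemma nbr_u : G.neighborFinset (pu p) = {pm p} := by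
  obtain ⟨a, ha⟩ := Finset.card_eq_one.mp
    (by rw [G.card_neighborFinset_eq_degree, deg_u p])
  have hm : pm p ∈ G.neighborFinset (pu p) := (G.mem_neighborFinset _ _).2 (adj_um p)
  rw [ha] at hm ⊢
  rw [Finset.mem_singleton] at hm
  rw [hm]

lemma nbr_m : G.neighborFinset (pm p) = {pu p, pv p} := by
  symm
  apply Finset.eq_of_subset_of_card_le
  · intro y hy
    rw [Finset.mem_insert, Finset.mem_singleton] at hy
    rw [G.mem_neighborFinset]
    rcases hy with h | h
    · rw [h]; exact (adj_um p).symm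
    · rw [h]; exact adj_mv p
  · rw [G.card_neighborFinset_eq_degree, deg_m p, Finset.card_insert_of_notMem
      (by simpa using ne_uv p), Finset.card_singleton]

lemma adj_u_iff (y : V) : G.Adj (pu p) y ↔ y = pm p := by
  rw [← G.mem_neighborFinset, nbr_u p, Finset.mem_singleton]

lemma adj_m_iff (y : V) : G.Adj (pm p) y ↔ y = pu p ∨ y = pv p := by
  rw [← G.mem_neighborFinset, nbr_m p, Finset.mem_insert, Finset.mem_singleton]

variable {p} {q : PP G}

lemma pm_eq_of_pu_eq (h : pu p = pu q) : pm p = pm q := by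
  have := adj_um p
  rw [h, adj_u_iff q] at this
  exact this

lemma pv_eq_of_pu_eq (h : pu p = pu q) : pv p = pv q := by
  have hm := pm_eq_of_pu_eq h
  have := adj_mv p
  rw [hm, adj_m_iff q] at this
  rcases this with h1 | h1
  · exfalso
    have d1 := deg_u q
    have d3 := deg_v p
    rw [← h1] at d1
    omega
  · exact h1

lemma inj_u (h : pu p = pu q) : p = q := by
  have hv := pv_eq_of_pu_eq h
  have hm := pm_eq_of_pu_eq h
  have hw := walk_len2_eq G p.1.2.2 q.1.2.2 h hv (hlen p) (hlen q) hm
  apply Subtype.ext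
  obtain ⟨⟨u, v, w⟩, hp⟩ := p
  obtain ⟨⟨u', v', w'⟩, hq⟩ := q
  simp only [pu, pv] at h hv hw
  subst h; subst hv
  simpa using hw

lemma pu_ne_pm : pu p ≠ pm q := by
  intro h
  have d1 := deg_u p
  rw [h, deg_m q] at d1
  omega

lemma pu_ne_pv : pu p ≠ pv q := by
  intro h
  have d1 := deg_u p
  have := deg_v q
  rw [h] at d1
  omega

lemma pm_ne_pv : pm p ≠ pv q := by
  intro h
  have d1 := deg_m p
  have := deg_v q
  rw [h] at d1
  omega

lemma finite : Finite (PP G) := Finite.of_injective (fun p => pu p) (fun p q h => inj_u h)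

end PP

variable (G)

open PP in
noncomputable def xvec (lam : ℝ) (p : PP G) : V → ℝ :=
  fun z => (if z = pu p then 1 else 0) + (if z = pm p then 1 - lam else 0)

open PP in
lemma lap_mulVec (lam : ℝ) (hlam : lam * lam = 3 * lam - 1) (p : PP G) :
    (Matrix.diagonal (fun v => (G.degree v : ℝ)) - G.adjMatrix ℝ) *ᵥ xvec G lam p
      = lam • xvec G lam p + (lam - 1) • (fun z => if z = pv p then (1:ℝ) else 0) := by
  funext z
  have hsum : ∑ y ∈ G.neighborFinset z, xvec G lam p y
      = (if pu p ∈ G.neighborFinset z then (1:ℝ) else 0)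
        + (if pm p ∈ G.neighborFinset z then 1 - lam else 0) := by
    simp only [xvec]
    rw [Finset.sum_add_distrib, Finset.sum_ite_eq', Finset.sum_ite_eq']
  simp only [Matrix.sub_mulVec, Pi.sub_apply, Matrix.mulVec_diagonal,
    SimpleGraph.adjMatrix_mulVec_apply, Pi.add_apply, Pi.smul_apply, smul_eq_mul]
  rw [hsum]
  simp only [SimpleGraph.mem_neighborFinset, xvec]
  by_cases hzu : z = pu p
  · subst hzu
    rw [if_pos rfl, if_neg (pu_ne_pm (p := p) (q := p)), if_neg (pu_ne_pv (p := p) (q := p)),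
      if_neg (G.irrefl), if_pos (adj_um p), deg_u p]
    push_cast
    ring
  · by_cases hzm : z = pm p
    · subst hzm
      rw [if_neg (ne_mu p), if_pos rfl, if_neg (ne_mv p), if_pos ((adj_um p).symm),
        if_neg (G.irrefl), deg_m p]
      push_cast
      linear_combination hlam
    · by_cases hzv : z = pv p
      · subst hzv
        have hnadj : ¬ G.Adj (pv p) (pu p) := by
          intro hadj
          have := (adj_u_iff p (pv p)).mp hadj.symm
          exact (pm_ne_pv (p := p) (q := p)) this.symm
        rw [if_neg hzu, if_neg hzm, if_pos rfl, if_neg hnadj, if_pos ((adj_mv p).symm)]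
        ring
      · have h1 : ¬ G.Adj z (pu p) := by
          intro hadj
          exact hzm ((adj_u_iff p z).mp hadj.symm)
        have h2 : ¬ G.Adj z (pm p) := by
          intro hadj
          rcases (adj_m_iff p z).mp hadj.symm with h | h
          · exact hzu h
          · exact hzv h
        rw [if_neg hzu, if_neg hzm, if_neg hzv, if_neg h1, if_neg h2]
        ring

lemma lap_herm :
    (Matrix.diagonal (fun v => (G.degree v : ℝ)) - G.adjMatrix ℝ).IsHermitian := by
  have : (Matrix.diagonal (fun v => (G.degree v : ℝ)) - G.adjMatrix ℝ)ᴴ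
      = Matrix.diagonal (fun v => (G.degree v : ℝ)) - G.adjMatrix ℝ := by
    ext i j
    simp only [Matrix.conjTranspose_apply, Matrix.sub_apply, star_sub, star_trivial,
      Matrix.diagonal_apply, SimpleGraph.adjMatrix_apply]
    by_cases h : i = j
    · subst h; simp [G.adj_comm]
    · simp [h, Ne.symm h, G.adj_comm]
  exact this

open PP in
lemma xvec_at_pu (lam : ℝ) (q r : PP G) : xvec G lam q (pu r) = if q = r then 1 else 0 := by
  rw [xvec]
  rw [if_neg (pu_ne_pm (p := r) (q := q))]
  by_cases h : q = r
  · subst h; rw [if_pos rfl, if_pos rfl]; ring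
  · rw [if_neg h, if_neg (fun he => h (inj_u he.symm))]
    ring

open PP in
lemma main_aux (lam : ℝ) (hlam : lam * lam = 3 * lam - 1) :
    Nat.card (PP G) -
      Nat.card {v : V // 3 ≤ G.degree v ∧ ∃ u, ∃ w : G.Walk u v, IsPendantPath G w 2}
      ≤ (Matrix.charpoly (Matrix.diagonal (fun v => (G.degree v : ℝ)) -
          G.adjMatrix ℝ)).rootMultiplicity lam := by
  classical
  haveI : Finite (PP G) := PP.finite
  haveI : Fintype (PP G) := Fintype.ofFinite _
  set Q := {v : V // 3 ≤ G.degree v ∧ ∃ u, ∃ w : G.Walk u v, IsPendantPath G w 2} with hQ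
  let Wmap : PP G → Q := fun p => ⟨pv p, deg_v p, p.1.1, p.1.2.2, p.2⟩
  have hWsurj : Function.Surjective Wmap := by
    rintro ⟨v, hv3, u, w, hw⟩
    exact ⟨⟨⟨u, v, w⟩, hw⟩, rfl⟩
  let s : Q → PP G := Function.surjInv hWsurj
  have hs : ∀ q, Wmap (s q) = q := fun q => Function.surjInv_eq hWsurj q
  have hs_inj : Function.Injective s := fun a b h => by rw [← hs a, ← hs b, h]
  have hpv_s : ∀ p : PP G, pv (s (Wmap p)) = pv p := fun p =>
    congrArg Subtype.val (hs (Wmap p))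
  let T := {p : PP G // p ∉ Set.range s}
  haveI : Fintype T := Fintype.ofFinite _
  let y : T → V → ℝ := fun t => xvec G lam t.1 - xvec G lam (s (Wmap t.1))
  have heig : ∀ t, (Matrix.diagonal (fun v => (G.degree v : ℝ)) - G.adjMatrix ℝ) *ᵥ y t
      = lam • y t := by
    intro t
    show _ *ᵥ (xvec G lam t.1 - xvec G lam (s (Wmap t.1))) = _
    rw [Matrix.mulVec_sub, lap_mulVec G lam hlam, lap_mulVec G lam hlam, hpv_s]
    show _ = lam • (xvec G lam t.1 - xvec G lam (s (Wmap t.1)))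
    rw [smul_sub]
    abel
  have hind : LinearIndependent ℝ y := by
    rw [Fintype.linearIndependent_iff]
    intro g hg t₀
    have hy : ∀ t : T, y t (pu t₀.1) = if t = t₀ then 1 else 0 := by
      intro t
      show xvec G lam t.1 (pu t₀.1) - xvec G lam (s (Wmap t.1)) (pu t₀.1) = _
      rw [xvec_at_pu, xvec_at_pu]
      rw [if_neg (fun h : s (Wmap t.1) = t₀.1 => t₀.2 ⟨Wmap t.1, h⟩)]
      by_cases h : t = t₀
      · subst h; rw [if_pos rfl, if_pos rfl]; ring
      · rw [if_neg (fun he => h (Subtype.ext he)), if_neg h]; ring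
    have h0 := congrFun hg (pu t₀.1)
    rw [Finset.sum_apply] at h0
    simp only [Pi.smul_apply, smul_eq_mul, Pi.zero_apply, hy, mul_ite, mul_one, mul_zero] at h0
    rw [Finset.sum_ite_eq'] at h0
    simpa using h0
  have hkey := card_le_rootMultiplicity_of_eigenvectors
    (Matrix.diagonal (fun v => (G.degree v : ℝ)) - G.adjMatrix ℝ) (lap_herm G) lam y hind heig
  have hQcard : Fintype.card {p : PP G // p ∈ Set.range s} = Nat.card Q := by
    rw [← Nat.card_eq_fintype_card]
    exact Nat.card_range_of_injective hs_inj
  have hTcard : Fintype.card T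
      = Fintype.card (PP G) - Fintype.card {p : PP G // p ∈ Set.range s} :=
    Fintype.card_subtype_compl _
  have hfin : Nat.card (PP G) - Nat.card Q = Fintype.card T := by
    rw [Nat.card_eq_fintype_card (α := PP G), hTcard, hQcard]
  rw [hfin]
  exact hkey


end GraphAux

/-- `pendantPathCount G k` is `p_k(G)`, the number of pendant paths of length `k` of `G`. -/
noncomputable def pendantPathCount {V : Type*} [Fintype V] [DecidableEq V]
    (G : SimpleGraph V) [DecidableRel G.Adj] (k : ℕ) : ℕ :=
  Nat.card {p : (u : V) × (v : V) × G.Walk u v // IsPendantPath G p.2.2 k}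

/-- `pendantAttachCount G k` is `q_k(G)`, the number of vertices of degree at least `3`
which are an end vertex of some pendant path of length `k`. -/
noncomputable def pendantAttachCount {V : Type*} [Fintype V] [DecidableEq V]
    (G : SimpleGraph V) [DecidableRel G.Adj] (k : ℕ) : ℕ :=
  Nat.card {v : V // 3 ≤ G.degree v ∧ ∃ u, ∃ w : G.Walk u v, IsPendantPath G w k}

/-- For any graph `G`, each of `(3+√5)/2` and `(3-√5)/2` is a Laplacian eigenvalue of `G`
with multiplicity at least `p₂(G) - q₂(G)`. -/
theorem laplacian_golden_eigenvalues {V : Type*} [Fintype V] [DecidableEq V]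
    (G : SimpleGraph V) [DecidableRel G.Adj] :
    pendantPathCount G 2 - pendantAttachCount G 2 ≤
      Polynomial.rootMultiplicity ((3 + Real.sqrt 5) / 2)
        (Matrix.charpoly (Matrix.diagonal (fun v => (G.degree v : ℝ)) - G.adjMatrix ℝ)) ∧
    pendantPathCount G 2 - pendantAttachCount G 2 ≤
      Polynomial.rootMultiplicity ((3 - Real.sqrt 5) / 2)
        (Matrix.charpoly (Matrix.diagonal (fun v => (G.degree v : ℝ)) - G.adjMatrix ℝ)) := by
  constructor
  · exact main_aux G ((3 + Real.sqrt 5) / 2) (by linear_combination sqrt5_sq / 4)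
  · exact main_aux G ((3 - Real.sqrt 5) / 2) (by linear_combination sqrt5_sq / 4)
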